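/- The divergence-type operator S is closed from L¹(Θ×Ω, ν⊗P) to L¹(Ω, P): if u⁽ⁿ⁾ → 0 in L¹(ν⊗P) and Su⁽ⁿ⁾ → G in L¹(P), then G = 0. -/

import Mathlib

open MeasureTheory ENNReal Real Filter Topology

namespace PoissonCanonical

variable {Θ : Type*} [MeasurableSpace Θ]

/-- The canonical configuration space: finite sequences of points of `Θ`. -/
abbrev Config (Θ : Type*) := Σ n : ℕ, (Fin n → Θ)

/-- `ε⁺_θ`: add the point `θ` to the configuration. -/
def eplus (θ : Θ) : Config Θ → Config Θ
  | ⟨n, f⟩ => ⟨n + 1, Fin.cons θ f⟩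

/-- The pathwise integral `(Su)(ω) = Σ_i u(θ_i, ε⁻_{θ_i} ω)`. -/
noncomputable def S (u : Θ → Config Θ → ℝ) : Config Θ → ℝ
  | ⟨0, _⟩ => 0
  | ⟨n + 1, f⟩ => ∑ i : Fin (n + 1), u (f i) ⟨n, i.removeNth f⟩

/-- The canonical Poisson probability measure with intensity `ν`:
`P(B) = e^{-ν(Θ)} Σ_n ν^{⊗n}(B_n)/n!`. -/
noncomputable def poissonP (ν : Measure Θ) : Measure (Config Θ) :=
  Measure.sum fun n =>
    (ENNReal.ofReal (Real.exp (-(ν Set.univ).toReal)) / (Nat.factorial n : ℝ≥0∞)) •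
      Measure.map (Sigma.mk n) (Measure.pi fun _ : Fin n => ν)

/-- The creation operator `(T_θ F)(ω) = F(ε⁺_θ ω)`. -/
def T (F : Config Θ → ℝ) (θ : Θ) (ω : Config Θ) : ℝ := F (eplus θ ω)

/-- The difference operator `Ψ_θ F = T_θ F - F`. -/
def Psi (F : Config Θ → ℝ) (θ : Θ) (ω : Config Θ) : ℝ := F (eplus θ ω) - F ω

/-- `ℰu = ∫_Θ u_θ ν(dθ)`. -/
noncomputable def calE (ν : Measure Θ) (u : Θ → Config Θ → ℝ) (ω : Config Θ) : ℝ :=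
  ∫ θ, u θ ω ∂ν

/-- The compensated (Skorohod-type) integral `Φ = S - ℰ`. -/
noncomputable def Phi (ν : Measure Θ) (u : Θ → Config Θ → ℝ) (ω : Config Θ) : ℝ :=
  S u ω - calE ν u ω

/-- A functional on the canonical space is symmetric if it is invariant under
permutations of the points of the configuration. -/
def Symm (F : Config Θ → ℝ) : Prop :=
  ∀ (n : ℕ) (f : Fin n → Θ) (e : Equiv.Perm (Fin n)), F ⟨n, f ∘ e⟩ = F ⟨n, f⟩

lemma measurable_sigmaMk (n : ℕ) : Measurable (@Sigma.mk ℕ (fun n => Fin n → Θ) n) :=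
  measurable_iff_le_map.2 (iInf_le _ n)

lemma measurable_config_iff {β : Type*} [MeasurableSpace β] {g : Config Θ → β} :
    Measurable g ↔ ∀ n, Measurable (fun f : Fin n → Θ => g ⟨n, f⟩) := by
  constructor
  · intro h n; exact h.comp (measurable_sigmaMk n)
  · intro h s hs
    rw [show (MeasurableSet (g ⁻¹' s)) ↔ _ from MeasurableSpace.measurableSet_iInf]
    intro n
    exact h n hs

instance poissonP_sfinite (ν : Measure Θ) [IsFiniteMeasure ν] : SFinite (poissonP ν) := by
  unfold poissonP
  have h : ∀ n : ℕ, IsFiniteMeasure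
      ((ENNReal.ofReal (Real.exp (-(ν Set.univ).toReal)) / (Nat.factorial n : ℝ≥0∞)) •
        (Measure.map (Sigma.mk n) (Measure.pi fun _ : Fin n => ν) : Measure (Config Θ))) :=
    fun n => Measure.smul_finite _
      (ENNReal.div_lt_top ENNReal.ofReal_ne_top (by exact_mod_cast Nat.factorial_ne_zero n)).ne
  exact MeasureTheory.sfinite_sum_of_countable _

lemma tsum_shift' {a : ℕ → ℝ≥0∞} (h0 : a 0 = 0) : ∑' n, a n = ∑' n, a (n + 1) := by
  rw [tsum_eq_zero_add' ENNReal.summable, h0, zero_add]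

noncomputable def Sext (v : Θ → Config Θ → ℝ≥0∞) : Config Θ → ℝ≥0∞
  | ⟨0, _⟩ => 0
  | ⟨n + 1, f⟩ => ∑ i : Fin (n + 1), v (f i) ⟨n, i.removeNth f⟩

lemma lintegral_poissonP (ν : Measure Θ) (F : Config Θ → ℝ≥0∞) (hF : Measurable F) :
    ∫⁻ ω, F ω ∂(poissonP ν) =
      ∑' n : ℕ, (ENNReal.ofReal (Real.exp (-(ν Set.univ).toReal)) / (Nat.factorial n : ℝ≥0∞)) *
        ∫⁻ f, F ⟨n, f⟩ ∂(Measure.pi fun _ : Fin n => ν) := by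
  rw [poissonP, lintegral_sum_measure]
  congr 1; funext n
  rw [lintegral_smul_measure, lintegral_map hF (measurable_sigmaMk n), smul_eq_mul]

set_option maxHeartbeats 1000000 in
lemma mecke (ν : Measure Θ) [IsFiniteMeasure ν] (v : Θ → Config Θ → ℝ≥0∞)
    (hv : Measurable (Function.uncurry v)) :
    ∫⁻ ω, Sext v ω ∂(poissonP ν) = ∫⁻ p, v p.1 p.2 ∂(ν.prod (poissonP ν)) := by
  set c := ENNReal.ofReal (Real.exp (-(ν Set.univ).toReal)) with hc
  have hSmeas : Measurable (Sext v) := by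
    rw [measurable_config_iff]
    rintro (_ | n)
    · exact measurable_const
    · refine Finset.measurable_sum _ fun i _ => ?_
      have hmap : Measurable fun f : Fin (n + 1) → Θ =>
          ((f i, ⟨n, i.removeNth f⟩) : Θ × Config Θ) :=
        (measurable_pi_apply i).prodMk ((measurable_sigmaMk n).comp
          (measurable_pi_iff.2 fun j => measurable_pi_apply _))
      exact hv.comp hmap
  have hvn : ∀ n : ℕ, Measurable fun p : Θ × (Fin n → Θ) => v p.1 ⟨n, p.2⟩ :=
    fun n => hv.comp (measurable_fst.prodMk ((measurable_sigmaMk n).comp measurable_snd))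
  rw [lintegral_poissonP ν _ hSmeas]
  rw [show ∫⁻ p, v p.1 p.2 ∂(ν.prod (poissonP ν))
      = ∫⁻ θ, ∫⁻ ω, v θ ω ∂(poissonP ν) ∂ν from lintegral_prod _ hv.aemeasurable]
  have hinner : ∀ θ : Θ, ∫⁻ ω, v θ ω ∂(poissonP ν) =
      ∑' n : ℕ, c / (Nat.factorial n : ℝ≥0∞) *
        ∫⁻ f, v θ ⟨n, f⟩ ∂(Measure.pi fun _ : Fin n => ν) := fun θ =>
    lintegral_poissonP ν _ (hv.comp measurable_prodMk_left)
  simp_rw [hinner]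
  rw [lintegral_tsum (fun n => (((hvn n).lintegral_prod_right'.const_mul
    (c / (Nat.factorial n : ℝ≥0∞)))).aemeasurable)]
  -- now both sides are tsums; compare
  have hB : ∀ n : ℕ, ∫⁻ θ, c / (Nat.factorial n : ℝ≥0∞) *
        ∫⁻ f, v θ ⟨n, f⟩ ∂(Measure.pi fun _ : Fin n => ν) ∂ν
      = c / (Nat.factorial n : ℝ≥0∞) *
        ∫⁻ p, v p.1 ⟨n, p.2⟩ ∂(ν.prod (Measure.pi fun _ : Fin n => ν)) := by
    intro n
    rw [lintegral_const_mul _ (hvn n).lintegral_prod_right',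
      lintegral_prod _ (hvn n).aemeasurable]
  simp_rw [hB]
  rw [tsum_shift' (by simp [Sext])]
  refine tsum_congr fun n => ?_
  -- LHS term for n+1 equals RHS term for n
  have hterm : ∫⁻ f, Sext v ⟨n + 1, f⟩ ∂(Measure.pi fun _ : Fin (n + 1) => ν)
      = (n + 1 : ℝ≥0∞) * ∫⁻ p, v p.1 ⟨n, p.2⟩ ∂(ν.prod (Measure.pi fun _ : Fin n => ν)) := by
    have : ∀ i : Fin (n + 1),
        ∫⁻ f, v (f i) ⟨n, i.removeNth f⟩ ∂(Measure.pi fun _ : Fin (n + 1) => ν)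
        = ∫⁻ p, v p.1 ⟨n, p.2⟩ ∂(ν.prod (Measure.pi fun _ : Fin n => ν)) := by
      intro i
      have hmp := measurePreserving_piFinSuccAbove (fun _ : Fin (n + 1) => ν) i
      exact hmp.lintegral_comp (hvn n)
    calc ∫⁻ f, Sext v ⟨n + 1, f⟩ ∂(Measure.pi fun _ : Fin (n + 1) => ν)
        = ∑ i : Fin (n + 1), ∫⁻ f, v (f i) ⟨n, i.removeNth f⟩
            ∂(Measure.pi fun _ : Fin (n + 1) => ν) := by
          refine lintegral_finset_sum _ fun i _ => ?_
          have hmap : Measurable fun f : Fin (n + 1) → Θ =>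
              ((f i, ⟨n, i.removeNth f⟩) : Θ × Config Θ) :=
            (measurable_pi_apply i).prodMk ((measurable_sigmaMk n).comp
              (measurable_pi_iff.2 fun j => measurable_pi_apply _))
          exact hv.comp hmap
      _ = ∑ _i : Fin (n + 1), ∫⁻ p, v p.1 ⟨n, p.2⟩
            ∂(ν.prod (Measure.pi fun _ : Fin n => ν)) := by
          exact Finset.sum_congr rfl fun i _ => this i
      _ = (n + 1 : ℝ≥0∞) * _ := by
          rw [Finset.sum_const, Finset.card_univ, Fintype.card_fin, nsmul_eq_mul]
          norm_num
  rw [hterm, ← mul_assoc]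
  congr 1
  -- c / (n+1)! * (n+1) = c / n!
  have hfac : ((n + 1).factorial : ℝ≥0∞) = (n + 1 : ℝ≥0∞) * (n.factorial : ℝ≥0∞) := by
    rw [Nat.factorial_succ]; push_cast; ring
  have hn0 : ((n : ℝ≥0∞) + 1) ≠ 0 := by simp
  have hnt : ((n : ℝ≥0∞) + 1) ≠ ∞ := by
    simp [ENNReal.add_ne_top]
  rw [hfac, div_eq_mul_inv, ENNReal.mul_inv (Or.inl hn0) (Or.inl hnt)]
  calc c * (((n : ℝ≥0∞) + 1)⁻¹ * ((n.factorial : ℝ≥0∞))⁻¹) * ((n : ℝ≥0∞) + 1)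
      = c * ((n.factorial : ℝ≥0∞))⁻¹ * (((n : ℝ≥0∞) + 1)⁻¹ * ((n : ℝ≥0∞) + 1)) := by
        ring
    _ = c * ((n.factorial : ℝ≥0∞))⁻¹ := by
        rw [ENNReal.inv_mul_cancel hn0 hnt, mul_one]
    _ = c / (n.factorial : ℝ≥0∞) := (div_eq_mul_inv _ _).symm

lemma S_bound (ν : Measure Θ) [IsFiniteMeasure ν] (u : Θ → Config Θ → ℝ)
    (hm : Measurable (Function.uncurry u))
    (hui : Integrable (fun p : Θ × Config Θ => u p.1 p.2) (ν.prod (poissonP ν)))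
    (hSi : Integrable (S u) (poissonP ν)) :
    ∫ ω, |S u ω| ∂(poissonP ν) ≤ ∫ p, |u p.1 p.2| ∂(ν.prod (poissonP ν)) := by
  set v : Θ → Config Θ → ℝ≥0∞ := fun θ ω => ENNReal.ofReal |u θ ω| with hvdef
  have hv : Measurable (Function.uncurry v) :=
    ENNReal.measurable_ofReal.comp hm.abs
  have hpt : ∀ ω : Config Θ, ENNReal.ofReal |S u ω| ≤ Sext v ω := by
    rintro ⟨(_ | n), f⟩
    · simp [S, Sext]
    · calc ENNReal.ofReal |S u ⟨n + 1, f⟩|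
          ≤ ENNReal.ofReal (∑ i : Fin (n + 1), |u (f i) ⟨n, i.removeNth f⟩|) :=
            ENNReal.ofReal_le_ofReal (Finset.abs_sum_le_sum_abs _ _)
        _ = ∑ i : Fin (n + 1), ENNReal.ofReal |u (f i) ⟨n, i.removeNth f⟩| :=
            ENNReal.ofReal_sum_of_nonneg (fun i _ => abs_nonneg _)
        _ = Sext v ⟨n + 1, f⟩ := rfl
  have h1 : ENNReal.ofReal (∫ ω, |S u ω| ∂(poissonP ν))
      = ∫⁻ ω, ENNReal.ofReal |S u ω| ∂(poissonP ν) :=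
    ofReal_integral_eq_lintegral_ofReal hSi.abs (Filter.Eventually.of_forall fun ω => abs_nonneg _)
  have h2 : ENNReal.ofReal (∫ p, |u p.1 p.2| ∂(ν.prod (poissonP ν)))
      = ∫⁻ p, ENNReal.ofReal |u p.1 p.2| ∂(ν.prod (poissonP ν)) :=
    ofReal_integral_eq_lintegral_ofReal hui.abs (Filter.Eventually.of_forall fun p => abs_nonneg _)
  have h3 : ∫⁻ ω, ENNReal.ofReal |S u ω| ∂(poissonP ν)
      ≤ ∫⁻ p, ENNReal.ofReal |u p.1 p.2| ∂(ν.prod (poissonP ν)) := by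
    calc ∫⁻ ω, ENNReal.ofReal |S u ω| ∂(poissonP ν)
        ≤ ∫⁻ ω, Sext v ω ∂(poissonP ν) := lintegral_mono hpt
      _ = ∫⁻ p, v p.1 p.2 ∂(ν.prod (poissonP ν)) := mecke ν v hv
      _ = ∫⁻ p, ENNReal.ofReal |u p.1 p.2| ∂(ν.prod (poissonP ν)) := rfl
  rw [← ENNReal.ofReal_le_ofReal_iff (integral_nonneg fun p => abs_nonneg _), h1, h2]
  exact h3

/-- The operator `S` is closed from `L¹(Θ×Ω, ν⊗P)` to `L¹(Ω,P)`: if `uⁿ → 0` in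
`L¹(ν⊗P)` and `S uⁿ → G` in `L¹(P)`, then `G = 0` a.s. -/
theorem S_closed_L1 (ν : Measure Θ) [IsFiniteMeasure ν]
    (u : ℕ → Θ → Config Θ → ℝ) (G : Config Θ → ℝ)
    (humeas : ∀ n, Measurable (Function.uncurry (u n)))
    (hu : ∀ n, Integrable (fun p : Θ × Config Θ => u n p.1 p.2) (ν.prod (poissonP ν)))
    (hSu : ∀ n, Integrable (S (u n)) (poissonP ν))
    (hG : Integrable G (poissonP ν))
    (hu0 : Filter.Tendsto (fun n => ∫ p, |u n p.1 p.2| ∂(ν.prod (poissonP ν)))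
      Filter.atTop (nhds 0))
    (hSG : Filter.Tendsto (fun n => ∫ ω, |S (u n) ω - G ω| ∂(poissonP ν))
      Filter.atTop (nhds 0)) :
    ∀ᵐ ω ∂(poissonP ν), G ω = 0 := by
  have key : ∀ n, ∫ ω, |G ω| ∂(poissonP ν) ≤
      ∫ ω, |S (u n) ω - G ω| ∂(poissonP ν) + ∫ p, |u n p.1 p.2| ∂(ν.prod (poissonP ν)) := by
    intro n
    have hint1 : Integrable (fun ω => |S (u n) ω - G ω|) (poissonP ν) := ((hSu n).sub hG).abs
    have hint2 : Integrable (fun ω => |S (u n) ω|) (poissonP ν) := (hSu n).abs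
    have hmono : ∫ ω, |G ω| ∂(poissonP ν) ≤
        ∫ ω, (|S (u n) ω - G ω| + |S (u n) ω|) ∂(poissonP ν) := by
      refine integral_mono hG.abs (hint1.add hint2) fun ω => ?_
      calc |G ω| = |S (u n) ω - (S (u n) ω - G ω)| := by ring_nf
        _ ≤ |S (u n) ω| + |S (u n) ω - G ω| := abs_sub _ _
        _ = |S (u n) ω - G ω| + |S (u n) ω| := add_comm _ _
    rw [integral_add hint1 hint2] at hmono
    have := S_bound ν (u n) (humeas n) (hu n) (hSu n)
    linarith
  have hlim : Filter.Tendsto (fun n => ∫ ω, |S (u n) ω - G ω| ∂(poissonP ν) +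
      ∫ p, |u n p.1 p.2| ∂(ν.prod (poissonP ν))) Filter.atTop (nhds 0) := by
    simpa using hSG.add hu0
  have hle : ∫ ω, |G ω| ∂(poissonP ν) ≤ 0 :=
    ge_of_tendsto hlim (Filter.Eventually.of_forall key)
  have hzero : ∫ ω, |G ω| ∂(poissonP ν) = 0 :=
    le_antisymm hle (integral_nonneg fun ω => abs_nonneg _)
  have := (integral_eq_zero_iff_of_nonneg (fun ω => abs_nonneg (G ω)) hG.abs).1 hzero
  filter_upwards [this] with ω hω
  simpa using hω


end PoissonCanonical
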